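/- For every X ∈ V and every form φ on V the following commutator identities hold: L(i(X)φ) − i(X)(Lφ) = (JX)♭ ∧ φ; L(X♭ ∧ φ) − X♭ ∧ (Lφ) = 0; Λ(i(X)φ) − i(X)(Λφ) = 0; and Λ(X♭ ∧ φ) − X♭ ∧ (Λφ) = −i(JX)φ. -/

import Mathlib

open scoped RealInnerProductSpace
open Finset

noncomputable section

/-- `n`-forms on `V`: alternating `n`-linear maps `V^n → ℝ`. -/
abbrev Form (V : Type*) [AddCommGroup V] [Module ℝ V] (n : ℕ) :=
  AlternatingMap ℝ V ℝ (Fin n)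

variable {V : Type*} [NormedAddCommGroup V] [InnerProductSpace ℝ V]

/-- The metric dual covector `X♭`, as a 1-form: `X♭(Y) = ⟪X, Y⟫`. -/
def flat (X : V) : Form V 1 :=
  AlternatingMap.ofSubsingleton ℝ V ℝ 0 ((innerSL ℝ X).toLinearMap)

/-- Interior product `i(X)` on forms of positive degree. -/
def iprodS {n : ℕ} (X : V) (φ : Form V (n + 1)) : Form V n :=
  φ.curryLeft X

/-- Wedge product of a 1-form with an `n`-form. -/
def eps {n : ℕ} (ω : Form V 1) (φ : Form V n) : Form V (n + 1) :=
  AlternatingMap.domDomCongr (finSumFinEquiv.trans (finCongr (Nat.add_comm 1 n)))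
    ((TensorProduct.lid ℝ ℝ).toLinearMap.compAlternatingMap (ω.domCoprod φ))

/-- The Kähler form `Ω(X, Y) = ⟪X, J Y⟫` of an orthogonal complex structure `J`. -/
def Kform (J : V →ₗ[ℝ] V) (hJO : ∀ x y : V, ⟪J x, J y⟫ = ⟪x, y⟫)
    (hJ2 : ∀ x : V, J (J x) = -x) : Form V 2 where
  toFun v := ⟪v 0, J (v 1)⟫
  map_update_add' v i x y := by
    fin_cases i <;>
      simp [Function.update_apply, inner_add_left, inner_add_right, map_add]
  map_update_smul' v i c x := by
    fin_cases i <;>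
      simp [Function.update_apply, inner_smul_left, inner_smul_right, map_smul]
  map_eq_zero_of_eq' v i j hv hij := by
    have h01 : v 0 = v 1 := by
      fin_cases i <;> fin_cases j <;> simp_all
    have key : ∀ x : V, ⟪x, J x⟫ = 0 := by
      intro x
      have h1 := hJO x (J x)
      rw [hJ2 x] at h1
      have h2 : ⟪J x, -x⟫ = -⟪x, J x⟫ := by
        rw [inner_neg_right, real_inner_comm]
      rw [h2] at h1
      linarith
    show ⟪v 0, J (v 1)⟫ = 0
    rw [h01]
    exact key _

/-- Wedge product of a 2-form with an `n`-form. -/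
def wedge2 {n : ℕ} (ω : Form V 2) (φ : Form V n) : Form V (n + 2) :=
  AlternatingMap.domDomCongr (finSumFinEquiv.trans (finCongr (Nat.add_comm 2 n)))
    ((TensorProduct.lid ℝ ℝ).toLinearMap.compAlternatingMap (ω.domCoprod φ))

/-- The Lefschetz-type operator `L φ = Ω ∧ φ`. -/
def Lop {n : ℕ} (Ω : Form V 2) (φ : Form V n) : Form V (n + 2) :=
  wedge2 Ω φ

/-- The operator `Λ φ = -(1/2) ∑ₐ i(J eₐ) i(eₐ) φ`. -/
def Lam {q : ℕ} (J : V →ₗ[ℝ] V) (e : OrthonormalBasis (Fin q) ℝ V)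
    {n : ℕ} (φ : Form V (n + 2)) : Form V n :=
  (-(1 / 2 : ℝ)) • ∑ a, iprodS (J (e a)) (iprodS (e a) φ)

section AuxIK

variable {V : Type*} [NormedAddCommGroup V] [InnerProductSpace ℝ V]

/-- generic wedge, agreeing definitionally with `eps` and `wedge2`. -/
def wAux {k n : ℕ} (A : Form V k) (φ : Form V n) : Form V (n + k) :=
  AlternatingMap.domDomCongr (finSumFinEquiv.trans (finCongr (Nat.add_comm k n)))
    ((TensorProduct.lid ℝ ℝ).toLinearMap.compAlternatingMap (A.domCoprod φ))

lemma eps_eq_wAux {n : ℕ} (ω : Form V 1) (φ : Form V n) : eps ω φ = wAux ω φ := rfl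
lemma wedge2_eq_wAux {n : ℕ} (Ω : Form V 2) (φ : Form V n) : wedge2 Ω φ = wAux Ω φ := rfl

lemma iprodS_apply {n : ℕ} (X : V) (φ : Form V (n + 1)) (v : Fin n → V) :
    iprodS X φ v = φ (Fin.cons X v) := rfl

lemma wAux_scaled {k n : ℕ} (A : Form V k) (φ : Form V n) (w : Fin (n + k) → V) :
    ((k.factorial * n.factorial : ℕ) : ℝ) * wAux A φ w =
      ∑ τ : Equiv.Perm (Fin (n + k)),
        ((Equiv.Perm.sign τ : ℤ) : ℝ) *
          (A (fun t => w (τ (finCongr (Nat.add_comm k n) (finSumFinEquiv (Sum.inl t))))) *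
            φ (fun j => w (τ (finCongr (Nat.add_comm k n) (finSumFinEquiv (Sum.inr j)))))) := by
  set e : Fin k ⊕ Fin n ≃ Fin (n + k) := finSumFinEquiv.trans (finCongr (Nat.add_comm k n)) with he
  have h := MultilinearMap.domCoprod_alternization_eq A φ
  have h2 := DFunLike.congr_fun h (fun i => w (e i))
  rw [MultilinearMap.alternatization_apply] at h2
  set L := (TensorProduct.lid ℝ ℝ).toLinearMap with hLdef
  have hL := congrArg (fun x => L x) h2
  have hw : wAux A φ w = L ((A.domCoprod φ) (fun i => w (e i))) := rfl
  simp only [map_sum, AlternatingMap.smul_apply, MultilinearMap.domDomCongr_apply,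
    MultilinearMap.domCoprod_apply, Units.smul_def, map_zsmul, map_nsmul,
    LinearEquiv.coe_coe, TensorProduct.lid_tmul,
    AlternatingMap.coe_multilinearMap, Fintype.card_fin] at hL
  rw [← hw, nsmul_eq_mul] at hL
  rw [← hL]
  refine Fintype.sum_equiv (Equiv.permCongr e) _ _ fun σ => ?_
  have harg : ∀ z, (finCongr (Nat.add_comm k n)) (finSumFinEquiv z) = e z := fun z => rfl
  simp only [harg, Equiv.permCongr_apply, Equiv.symm_apply_apply, Equiv.Perm.sign_permCongr,
    hLdef, LinearEquiv.coe_coe, TensorProduct.lid_tmul,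
    smul_eq_mul, zsmul_eq_mul, Int.cast_mul]

/-- the sign `(-1)^{[p ≠ 0]}`. -/
def sg {m : ℕ} [NeZero m] (p : Fin m) : ℝ := if p = 0 then 1 else -1

lemma e1_inl {n : ℕ} (t : Fin 1) :
    (finCongr (Nat.add_comm 1 n) (finSumFinEquiv (Sum.inl t)) : Fin (n + 1)) = 0 := by
  simp [Fin.ext_iff, Fin.val_eq_zero t]

lemma e1_inr {n : ℕ} (j : Fin n) :
    (finCongr (Nat.add_comm 1 n) (finSumFinEquiv (Sum.inr j)) : Fin (n + 1)) = j.succ := by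
  simp [Fin.ext_iff]

lemma eps_scaled {n : ℕ} (ω : Form V 1) (φ : Form V n) (w : Fin (n + 1) → V) :
    (n.factorial : ℝ) * eps ω φ w =
      ∑ τ : Equiv.Perm (Fin (n + 1)),
        ((Equiv.Perm.sign τ : ℤ) : ℝ) * (ω (fun _ => w (τ 0)) * φ (fun j => w (τ j.succ))) := by
  have h := wAux_scaled (k := 1) ω φ w
  rw [eps_eq_wAux]
  simpa only [Nat.factorial_one, one_mul, e1_inl, e1_inr] using h

lemma sg_succ {m : ℕ} (k : Fin (m + 1)) : sg k.succ = -1 := if_neg (Fin.succ_ne_zero k)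

lemma eps_apply {n : ℕ} (ω : Form V 1) (φ : Form V n) (w : Fin (n + 1) → V) :
    eps ω φ w = ∑ p : Fin (n + 1),
      sg p * (ω (fun _ => w p) * φ (fun j => w (Equiv.swap 0 p j.succ))) := by
  have hfac : (n.factorial : ℝ) ≠ 0 := Nat.cast_ne_zero.mpr n.factorial_ne_zero
  apply mul_left_cancel₀ hfac
  rw [eps_scaled, ← Equiv.sum_comp (Equiv.Perm.decomposeFin).symm
      (fun τ => ((Equiv.Perm.sign τ : ℤ) : ℝ) *
        (ω (fun _ => w (τ 0)) * φ (fun j => w (τ j.succ)))), Fintype.sum_prod_type,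
    Finset.mul_sum]
  refine Finset.sum_congr rfl fun p _ => ?_
  have hterm : ∀ σ : Equiv.Perm (Fin n),
      ((Equiv.Perm.sign (Equiv.Perm.decomposeFin.symm (p, σ)) : ℤ) : ℝ) *
        (ω (fun _ => w (Equiv.Perm.decomposeFin.symm (p, σ) 0)) *
          φ (fun j => w (Equiv.Perm.decomposeFin.symm (p, σ) j.succ))) =
      sg p * (ω (fun _ => w p) * φ (fun j => w (Equiv.swap 0 p j.succ))) := by
    intro σ
    have hφ : φ (fun j => w (Equiv.Perm.decomposeFin.symm (p, σ) j.succ))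
        = ((Equiv.Perm.sign σ : ℤ) : ℝ) • φ (fun i => w (Equiv.swap 0 p i.succ)) := by
      have hc : (fun j => w (Equiv.Perm.decomposeFin.symm (p, σ) j.succ))
          = (fun i => w (Equiv.swap 0 p i.succ)) ∘ σ := by
        funext j; simp [Equiv.Perm.decomposeFin_symm_apply_succ]
      rw [hc, AlternatingMap.map_perm, Units.smul_def, Int.cast_smul_eq_zsmul]
    rw [hφ, Equiv.Perm.decomposeFin_symm_apply_zero, Equiv.Perm.decomposeFin.symm_sign]
    rcases Int.units_eq_one_or (Equiv.Perm.sign σ) with h | h <;>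
      by_cases hp : p = 0 <;> simp [h, hp, sg] <;> ring
  simp only [hterm]
  rw [Finset.sum_const, Finset.card_univ, Fintype.card_perm, Fintype.card_fin, nsmul_eq_mul]


lemma e2_inl0 {n : ℕ} :
    (finCongr (Nat.add_comm 2 n) (finSumFinEquiv (Sum.inl (0 : Fin 2))) : Fin (n + 2)) = 0 := by
  simp [Fin.ext_iff]

lemma e2_inl1 {n : ℕ} :
    (finCongr (Nat.add_comm 2 n) (finSumFinEquiv (Sum.inl (1 : Fin 2))) : Fin (n + 2)) = 1 := by
  simp [Fin.ext_iff]

lemma e2_inr {n : ℕ} (j : Fin n) :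
    (finCongr (Nat.add_comm 2 n) (finSumFinEquiv (Sum.inr j)) : Fin (n + 2)) = j.succ.succ := by
  simp [Fin.ext_iff]

lemma wedge2_apply {n : ℕ} (Ω : Form V 2) (φ : Form V n) (w : Fin (n + 2) → V) :
    2 * wedge2 Ω φ w = ∑ p : Fin (n + 2),
      sg p * eps (iprodS (w p) Ω) φ (fun i => w (Equiv.swap 0 p i.succ)) := by
  have hfac : (n.factorial : ℝ) ≠ 0 := Nat.cast_ne_zero.mpr n.factorial_ne_zero
  apply mul_left_cancel₀ hfac
  have h := wAux_scaled (k := 2) Ω φ w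
  have hkey : ∀ τ : Equiv.Perm (Fin (n + 2)),
      (fun t : Fin 2 => w (τ (finCongr (Nat.add_comm 2 n) (finSumFinEquiv (Sum.inl t)))))
        = Fin.cons (w (τ 0)) (fun _ : Fin 1 => w (τ 1)) := by
    intro τ; funext t
    refine Fin.cases ?_ (fun s => ?_) t
    · rw [e2_inl0]; simp
    · have hs : s = 0 := Subsingleton.elim _ _
      subst hs
      rw [Fin.succ_zero_eq_one, e2_inl1]
      simp
  simp only [hkey, e2_inr] at h
  have h2 : (n.factorial : ℝ) * (2 * wedge2 Ω φ w)
      = ∑ τ : Equiv.Perm (Fin (n + 2)),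
        ((Equiv.Perm.sign τ : ℤ) : ℝ) *
          (Ω (Fin.cons (w (τ 0)) (fun _ : Fin 1 => w (τ 1))) *
            φ (fun j => w (τ j.succ.succ))) := by
    rw [← h, wedge2_eq_wAux, Nat.factorial_two]
    push_cast
    ring
  rw [h2, ← Equiv.sum_comp (Equiv.Perm.decomposeFin).symm
      (fun τ => ((Equiv.Perm.sign τ : ℤ) : ℝ) *
          (Ω (Fin.cons (w (τ 0)) (fun _ : Fin 1 => w (τ 1))) *
            φ (fun j => w (τ j.succ.succ)))), Fintype.sum_prod_type, Finset.mul_sum]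
  refine Finset.sum_congr rfl fun p _ => ?_
  have hterm : ∀ σ : Equiv.Perm (Fin (n + 1)),
      ((Equiv.Perm.sign (Equiv.Perm.decomposeFin.symm (p, σ)) : ℤ) : ℝ) *
        (Ω (Fin.cons (w (Equiv.Perm.decomposeFin.symm (p, σ) 0))
            (fun _ : Fin 1 => w (Equiv.Perm.decomposeFin.symm (p, σ) 1))) *
          φ (fun j => w (Equiv.Perm.decomposeFin.symm (p, σ) j.succ.succ))) =
      sg p * (((Equiv.Perm.sign σ : ℤ) : ℝ) *
        ((iprodS (w p) Ω) (fun _ : Fin 1 => w (Equiv.swap 0 p (σ 0).succ)) *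
          φ (fun j => w (Equiv.swap 0 p (σ j.succ).succ)))) := by
    intro σ
    rw [Equiv.Perm.decomposeFin_symm_apply_zero, Equiv.Perm.decomposeFin_symm_apply_one,
      Equiv.Perm.decomposeFin.symm_sign]
    have : ∀ j : Fin n, Equiv.Perm.decomposeFin.symm (p, σ) j.succ.succ
        = Equiv.swap 0 p (σ j.succ).succ := fun j =>
      Equiv.Perm.decomposeFin_symm_apply_succ σ p j.succ
    simp only [this, iprodS_apply]
    rcases Int.units_eq_one_or (Equiv.Perm.sign σ) with hs | hs <;>
      by_cases hp : p = 0 <;> simp [hs, hp, sg] <;> ring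
  simp only [hterm]
  rw [← Finset.mul_sum]
  have hinner : ∑ σ : Equiv.Perm (Fin (n + 1)),
      ((Equiv.Perm.sign σ : ℤ) : ℝ) *
        ((iprodS (w p) Ω) (fun _ : Fin 1 => w (Equiv.swap 0 p (σ 0).succ)) *
          φ (fun j => w (Equiv.swap 0 p (σ j.succ).succ)))
      = (n.factorial : ℝ) * eps (iprodS (w p) Ω) φ (fun i => w (Equiv.swap 0 p i.succ)) :=
    (eps_scaled (iprodS (w p) Ω) φ (fun i => w (Equiv.swap 0 p i.succ))).symm
  rw [hinner]
  ring


lemma sg_zero {m : ℕ} : sg (0 : Fin (m + 1)) = 1 := if_pos rfl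

lemma form0_eq (φ : Form V 0) (a b : Fin 0 → V) : φ a = φ b :=
  congrArg φ (funext fun j => j.elim0)

lemma tuple_swap_cons {n : ℕ} (X : V) (v : Fin (n + 1) → V) (k : Fin (n + 1)) :
    (fun i : Fin (n + 1) => (Fin.cons X v : Fin (n + 2) → V) (Equiv.swap 0 k.succ i.succ))
      = Function.update v k X := by
  funext i
  rcases eq_or_ne i k with h | h
  · subst h
    rw [Equiv.swap_apply_right]
    simp
  · rw [Equiv.swap_apply_of_ne_of_ne (Fin.succ_ne_zero i)
      (fun hc => h (Fin.succ_injective _ hc))]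
    simp [Function.update_apply, h]

/-- `update v k X` as `cons X u ∘ swap 0 k`. -/
lemma form_update_eq {n : ℕ} (ψ : Form V (n + 1)) (X : V) (v : Fin (n + 1) → V)
    (k : Fin (n + 1)) :
    ψ (Function.update v k X)
      = sg k * ψ (Fin.cons X (fun i : Fin n => v (Equiv.swap 0 k i.succ))) := by
  rcases eq_or_ne k 0 with hk | hk
  · subst hk
    rw [sg_zero, one_mul]
    congr 1
    funext j
    refine Fin.cases ?_ (fun i => ?_) j <;>
      simp [Function.update_apply, Equiv.swap_self, Fin.succ_ne_zero]
  · have hupd : Function.update v k X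
        = (Fin.cons X (fun i : Fin n => v (Equiv.swap 0 k i.succ)) : Fin (n + 1) → V)
            ∘ (Equiv.swap 0 k) := by
      funext j
      rcases eq_or_ne j k with hj | hj
      · subst hj
        simp [Equiv.swap_apply_right]
      · rcases eq_or_ne j 0 with hj0 | hj0
        · subst hj0
          rw [Function.comp_apply, Equiv.swap_apply_left, Function.update_of_ne hj]
          obtain ⟨k', rfl⟩ : ∃ k', k = Fin.succ k' := ⟨k.pred hk, (Fin.succ_pred k hk).symm⟩
          rw [Fin.cons_succ, Equiv.swap_apply_right]
        · obtain ⟨j', rfl⟩ : ∃ j', j = Fin.succ j' := ⟨j.pred hj0, (Fin.succ_pred j hj0).symm⟩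
          simp only [Function.comp_apply, Function.update_apply, if_neg hj]
          rw [Equiv.swap_apply_of_ne_of_ne hj0 hj, Fin.cons_succ,
            Equiv.swap_apply_of_ne_of_ne hj0 hj]
    rw [hupd, AlternatingMap.map_swap _ _ (Ne.symm hk), sg, if_neg hk]
    ring

lemma leibA {n : ℕ} (ω : Form V 1) (φ : Form V (n + 1)) (X : V) :
    iprodS X (eps ω φ) = ω (fun _ => X) • φ - eps ω (iprodS X φ) := by
  ext v
  rw [AlternatingMap.sub_apply, AlternatingMap.smul_apply, iprodS_apply, eps_apply, eps_apply,
    smul_eq_mul, Fin.sum_univ_succ, sub_eq_add_neg, ← Finset.sum_neg_distrib]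
  congr 1
  · have h0 : (fun j : Fin (n + 1) => (Fin.cons X v : Fin (n + 2) → V)
        (Equiv.swap 0 (0 : Fin (n + 2)) j.succ)) = v := by
      funext j; simp [Equiv.swap_self]
    rw [h0]
    simp [sg_zero]
  · refine Finset.sum_congr rfl fun k _ => ?_
    rw [tuple_swap_cons, form_update_eq φ X v k, sg_succ, Fin.cons_succ, iprodS_apply]
    ring

lemma leibA0 (ω : Form V 1) (φ : Form V 0) (X : V) :
    iprodS X (eps ω φ) = ω (fun _ => X) • φ := by
  ext v
  rw [AlternatingMap.smul_apply, iprodS_apply, eps_apply, Fin.sum_univ_one, smul_eq_mul,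
    sg_zero, one_mul, Fin.cons_zero]
  congr 1

lemma iprod_anticomm {n : ℕ} (X Y : V) (φ : Form V (n + 2)) :
    iprodS X (iprodS Y φ) = - iprodS Y (iprodS X φ) := by
  ext v
  rw [AlternatingMap.neg_apply, iprodS_apply, iprodS_apply, iprodS_apply, iprodS_apply]
  have hss : ∀ i' : Fin n, (Fin.succ (Fin.succ i') : Fin (n + 2)) ≠ 1 := by
    intro i'
    simp [Fin.ext_iff]
  have hc : (Fin.cons Y (Fin.cons X v) : Fin (n + 2) → V)
      = (Fin.cons X (Fin.cons Y v) : Fin (n + 2) → V) ∘ Equiv.swap 0 1 := by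
    funext j
    rw [Function.comp_apply]
    refine Fin.cases ?_ (fun i => ?_) j
    · rw [Equiv.swap_apply_left, Fin.cons_zero, ← Fin.succ_zero_eq_one, Fin.cons_succ,
        Fin.cons_zero]
    · refine Fin.cases ?_ (fun i' => ?_) i
      · rw [Fin.cons_succ, Fin.cons_zero, Fin.succ_zero_eq_one, Equiv.swap_apply_right,
          Fin.cons_zero]
      · rw [Equiv.swap_apply_of_ne_of_ne (Fin.succ_ne_zero _) (hss i')]
        simp only [Fin.cons_succ]
  rw [hc, AlternatingMap.map_swap _ _ (Fin.zero_ne_one)]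

lemma iprodS_add {n : ℕ} (X : V) (φ ψ : Form V (n + 1)) :
    iprodS X (φ + ψ) = iprodS X φ + iprodS X ψ := rfl

lemma iprodS_smul {n : ℕ} (c : ℝ) (X : V) (φ : Form V (n + 1)) :
    iprodS X (c • φ) = c • iprodS X φ := rfl

lemma iprodS_neg {n : ℕ} (X : V) (φ : Form V (n + 1)) : iprodS X (-φ) = - iprodS X φ := rfl

lemma iprodS_sub {n : ℕ} (X : V) (φ ψ : Form V (n + 1)) :
    iprodS X (φ - ψ) = iprodS X φ - iprodS X ψ := rfl

lemma iprodS_sum {n : ℕ} {α : Type*} (s : Finset α) (f : α → Form V (n + 1)) (X : V) :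
    iprodS X (∑ a ∈ s, f a) = ∑ a ∈ s, iprodS X (f a) :=
  map_sum ((AlternatingMap.curryLeftLinearMap (R := ℝ)).flip X) f s


lemma eps_add_right {n : ℕ} (ω : Form V 1) (φ ψ : Form V n) :
    eps ω (φ + ψ) = eps ω φ + eps ω ψ := by
  ext w
  rw [AlternatingMap.add_apply, eps_apply, eps_apply, eps_apply, ← Finset.sum_add_distrib]
  refine Finset.sum_congr rfl fun p _ => ?_
  rw [AlternatingMap.add_apply]
  ring

lemma eps_smul_right {n : ℕ} (c : ℝ) (ω : Form V 1) (φ : Form V n) :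
    eps ω (c • φ) = c • eps ω φ := by
  ext w
  rw [AlternatingMap.smul_apply, smul_eq_mul, eps_apply, eps_apply, Finset.mul_sum]
  refine Finset.sum_congr rfl fun p _ => ?_
  rw [AlternatingMap.smul_apply, smul_eq_mul]
  ring

/-- `eps ω` as a linear map. -/
def epsLin {n : ℕ} (ω : Form V 1) : Form V n →ₗ[ℝ] Form V (n + 1) where
  toFun := eps ω
  map_add' := eps_add_right ω
  map_smul' c φ := eps_smul_right c ω φ

lemma eps_sub_right {n : ℕ} (ω : Form V 1) (φ ψ : Form V n) :
    eps ω (φ - ψ) = eps ω φ - eps ω ψ :=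
  map_sub (epsLin ω) φ ψ

lemma eps_sum_right {n : ℕ} {α : Type*} (ω : Form V 1) (s : Finset α) (f : α → Form V n) :
    eps ω (∑ a ∈ s, f a) = ∑ a ∈ s, eps ω (f a) :=
  map_sum (epsLin ω) f s

lemma eps_neg_left {n : ℕ} (ω : Form V 1) (φ : Form V n) : eps (-ω) φ = - eps ω φ := by
  ext w
  rw [AlternatingMap.neg_apply, eps_apply, eps_apply, ← Finset.sum_neg_distrib]
  refine Finset.sum_congr rfl fun p _ => ?_
  rw [AlternatingMap.neg_apply]
  ring

lemma wedge2_add_right {n : ℕ} (Ω : Form V 2) (φ ψ : Form V n) :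
    wedge2 Ω (φ + ψ) = wedge2 Ω φ + wedge2 Ω ψ := by
  ext w
  apply mul_left_cancel₀ (two_ne_zero (α := ℝ))
  rw [AlternatingMap.add_apply, mul_add, wedge2_apply, wedge2_apply, wedge2_apply,
    ← Finset.sum_add_distrib]
  refine Finset.sum_congr rfl fun p _ => ?_
  rw [eps_add_right, AlternatingMap.add_apply]
  ring

lemma wedge2_smul_right {n : ℕ} (c : ℝ) (Ω : Form V 2) (φ : Form V n) :
    wedge2 Ω (c • φ) = c • wedge2 Ω φ := by
  ext w
  apply mul_left_cancel₀ (two_ne_zero (α := ℝ))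
  rw [AlternatingMap.smul_apply, smul_eq_mul, wedge2_apply]
  rw [show (2 : ℝ) * (c * wedge2 Ω φ w) = c * (2 * wedge2 Ω φ w) by ring]
  rw [wedge2_apply, Finset.mul_sum]
  refine Finset.sum_congr rfl fun p _ => ?_
  rw [eps_smul_right, AlternatingMap.smul_apply, smul_eq_mul]
  ring

/-- `wedge2 Ω` as a linear map. -/
def wedge2Lin {n : ℕ} (Ω : Form V 2) : Form V n →ₗ[ℝ] Form V (n + 2) where
  toFun := wedge2 Ω
  map_add' := wedge2_add_right Ω
  map_smul' c φ := wedge2_smul_right c Ω φ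

lemma wedge2_sub_right {n : ℕ} (Ω : Form V 2) (φ ψ : Form V n) :
    wedge2 Ω (φ - ψ) = wedge2 Ω φ - wedge2 Ω ψ :=
  map_sub (wedge2Lin Ω) φ ψ

lemma form2_swap (Ω : Form V 2) (x y : V) :
    Ω (Fin.cons x (fun _ => y)) = - Ω (Fin.cons y (fun _ => x)) := by
  have hc : (Fin.cons x (fun _ : Fin 1 => y) : Fin 2 → V)
      = (Fin.cons y (fun _ : Fin 1 => x) : Fin 2 → V) ∘ Equiv.swap 0 1 := by
    funext j
    rw [Function.comp_apply]
    refine Fin.cases ?_ (fun i => ?_) j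
    · rw [Equiv.swap_apply_left, Fin.cons_zero, ← Fin.succ_zero_eq_one, Fin.cons_succ]
    · have hi : i = 0 := Subsingleton.elim _ _
      subst hi
      rw [Fin.cons_succ, Fin.succ_zero_eq_one, Equiv.swap_apply_right, Fin.cons_zero]
  rw [hc, AlternatingMap.map_swap _ _ (Fin.zero_ne_one)]


lemma leibB {n : ℕ} (Ω : Form V 2) (φ : Form V (n + 1)) (X : V) :
    iprodS X (wedge2 Ω φ) = eps (iprodS X Ω) φ + wedge2 Ω (iprodS X φ) := by
  ext v
  apply mul_left_cancel₀ (two_ne_zero (α := ℝ))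
  rw [AlternatingMap.add_apply, mul_add, iprodS_apply, wedge2_apply, Fin.sum_univ_succ]
  have hT0 : sg (0 : Fin (n + 3)) * eps (iprodS ((Fin.cons X v : Fin (n + 3) → V) 0) Ω) φ
      (fun i => (Fin.cons X v : Fin (n + 3) → V) (Equiv.swap 0 (0 : Fin (n + 3)) i.succ))
      = eps (iprodS X Ω) φ v := by
    have h0 : (fun i : Fin (n + 2) => (Fin.cons X v : Fin (n + 3) → V)
        (Equiv.swap 0 (0 : Fin (n + 3)) i.succ)) = v := by
      funext i; simp [Equiv.swap_self]
    rw [sg_zero, one_mul, Fin.cons_zero, h0]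
  rw [hT0]
  have hsum : ∀ k : Fin (n + 2),
      sg (Fin.succ k) * eps (iprodS ((Fin.cons X v : Fin (n + 3) → V) k.succ) Ω) φ
          (fun i => (Fin.cons X v : Fin (n + 3) → V) (Equiv.swap 0 k.succ i.succ))
        = sg k * ((iprodS X Ω) (fun _ => v k) * φ (fun i => v (Equiv.swap 0 k i.succ)))
          + sg k * eps (iprodS (v k) Ω) (iprodS X φ) (fun i => v (Equiv.swap 0 k i.succ)) := by
    intro k
    rw [sg_succ, Fin.cons_succ, tuple_swap_cons,
      form_update_eq (eps (iprodS (v k) Ω) φ) X v k]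
    have hA := DFunLike.congr_fun (leibA (iprodS (v k) Ω) φ X)
      (fun i : Fin (n + 1) => v (Equiv.swap 0 k i.succ))
    rw [iprodS_apply] at hA
    rw [hA, AlternatingMap.sub_apply, AlternatingMap.smul_apply, smul_eq_mul]
    have heq : (iprodS (v k) Ω) (fun _ : Fin 1 => X)
        = -((iprodS X Ω) (fun _ : Fin 1 => v k)) := by
      rw [iprodS_apply, iprodS_apply]
      exact form2_swap Ω (v k) X
    rw [heq]
    ring
  rw [Finset.sum_congr rfl fun k _ => hsum k, Finset.sum_add_distrib, ← eps_apply,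
    ← wedge2_apply]
  ring

lemma sg_one {m : ℕ} : sg (1 : Fin (m + 2)) = -1 :=
  if_neg (by simp [Fin.ext_iff])

lemma leibB0 (Ω : Form V 2) (φ : Form V 0) (X : V) :
    iprodS X (wedge2 Ω φ) = eps (iprodS X Ω) φ := by
  ext v
  apply mul_left_cancel₀ (two_ne_zero (α := ℝ))
  rw [iprodS_apply, wedge2_apply, Fin.sum_univ_two]
  have heval : ∀ (η : Form V 1) (u : Fin 1 → V) (z : Fin 0 → V),
      eps η φ u = η (fun _ => u 0) * φ z := by
    intro η u z
    rw [eps_apply, Fin.sum_univ_one, sg_zero, one_mul]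
    exact congrArg (fun t => η (fun _ => u 0) * t) (form0_eq φ _ z)
  have h1 : (Fin.cons X v : Fin 2 → V) 1 = v 0 := by
    rw [← Fin.succ_zero_eq_one, Fin.cons_succ]
  have hu0 : (fun i : Fin 1 => (Fin.cons X v : Fin 2 → V)
      (Equiv.swap 0 (0 : Fin 2) i.succ)) = v := by
    funext i
    have hi : i = 0 := Subsingleton.elim _ _
    subst hi
    simp [Equiv.swap_self]
  have hu1 : (fun i : Fin 1 => (Fin.cons X v : Fin 2 → V)
      (Equiv.swap 0 (1 : Fin 2) i.succ)) = fun _ : Fin 1 => X := by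
    funext i
    have hi : i = 0 := Subsingleton.elim _ _
    subst hi
    rw [Fin.succ_zero_eq_one, Equiv.swap_apply_right, Fin.cons_zero]
  rw [hu0, hu1, Fin.cons_zero, h1, sg_zero, sg_one]
  rw [heval (iprodS X Ω) v Fin.elim0,
    heval (iprodS (v 0) Ω) (fun _ : Fin 1 => X) Fin.elim0]
  beta_reduce
  have heq : (iprodS (v 0) Ω) (fun _ : Fin 1 => X)
      = -((iprodS X Ω) (fun _ : Fin 1 => v 0)) := by
    rw [iprodS_apply, iprodS_apply]
    exact form2_swap Ω (v 0) X
  rw [heq]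
  ring

lemma ext_iprod {n : ℕ} {α β : Form V (n + 1)} (h : ∀ Y, iprodS Y α = iprodS Y β) : α = β := by
  ext w
  have hw := DFunLike.congr_fun (h (w 0)) (Fin.tail w)
  rw [iprodS_apply, iprodS_apply, Fin.cons_self_tail] at hw
  exact hw


lemma epsComm {n : ℕ} (η ξ : Form V 1) (φ : Form V n) :
    eps η (eps ξ φ) = - eps ξ (eps η φ) := by
  induction n with
  | zero =>
    apply ext_iprod
    intro Y
    rw [iprodS_neg, leibA, leibA, leibA0, leibA0, eps_smul_right, eps_smul_right]
    module
  | succ m ih =>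
    apply ext_iprod
    intro Y
    rw [iprodS_neg, leibA, leibA, leibA, leibA, eps_sub_right, eps_sub_right,
      eps_smul_right, eps_smul_right, ih]
    module

lemma commL {n : ℕ} (Ω : Form V 2) (ξ : Form V 1) (φ : Form V n) :
    wedge2 Ω (eps ξ φ) = eps ξ (wedge2 Ω φ) := by
  induction n with
  | zero =>
    apply ext_iprod
    intro Y
    rw [leibB, leibA0, leibA, leibB0, wedge2_smul_right, epsComm]
    module
  | succ m ih =>
    apply ext_iprod
    intro Y
    rw [leibB, leibA, leibA, leibB, wedge2_sub_right, wedge2_smul_right, ih,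
      eps_add_right, epsComm]
    module


lemma iprodS_smul_vec {n : ℕ} (c : ℝ) (X : V) (φ : Form V (n + 1)) :
    iprodS (c • X) φ = c • iprodS X φ := map_smul φ.curryLeft c X

lemma iprodS_sum_vec {n : ℕ} {α : Type*} (s : Finset α) (g : α → V) (φ : Form V (n + 1)) :
    iprodS (∑ a ∈ s, g a) φ = ∑ a ∈ s, iprodS (g a) φ := map_sum φ.curryLeft g s

lemma iprodS_neg_vec {n : ℕ} (X : V) (φ : Form V (n + 1)) :
    iprodS (-X) φ = - iprodS X φ := map_neg φ.curryLeft X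

lemma sumS1 {q n : ℕ} (J : V →ₗ[ℝ] V) (e : OrthonormalBasis (Fin q) ℝ V) (X : V)
    (φ : Form V (n + 1)) :
    ∑ a, (⟪X, e a⟫ : ℝ) • iprodS (J (e a)) φ = iprodS (J X) φ := by
  rw [Finset.sum_congr rfl fun a _ => (iprodS_smul_vec ⟪X, e a⟫ (J (e a)) φ).symm,
    ← iprodS_sum_vec]
  congr 1
  rw [show (∑ a, (⟪X, e a⟫ : ℝ) • J (e a)) = J (∑ a, (⟪X, e a⟫ : ℝ) • e a) by
    rw [map_sum]; exact Finset.sum_congr rfl fun a _ => (map_smul J _ _).symm]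
  congr 1
  conv_rhs => rw [← e.sum_repr' X]
  exact Finset.sum_congr rfl fun a _ => by rw [real_inner_comm]

lemma sumS2 {q n : ℕ} (J : V →ₗ[ℝ] V) (hflip : ∀ x y : V, (⟪x, J y⟫ : ℝ) = -⟪J x, y⟫)
    (e : OrthonormalBasis (Fin q) ℝ V) (X : V) (φ : Form V (n + 1)) :
    ∑ a, (⟪X, J (e a)⟫ : ℝ) • iprodS (e a) φ = - iprodS (J X) φ := by
  have h1 : ∀ a : Fin q, (⟪X, J (e a)⟫ : ℝ) • iprodS (e a) φ
      = -((⟪J X, e a⟫ : ℝ) • iprodS (e a) φ) := by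
    intro a; rw [hflip]; ext v; simp
  rw [Finset.sum_congr rfl fun a _ => h1 a, Finset.sum_neg_distrib]
  congr 1
  rw [Finset.sum_congr rfl fun a _ => (iprodS_smul_vec ⟪J X, e a⟫ (e a) φ).symm,
    ← iprodS_sum_vec]
  congr 1
  conv_rhs => rw [← e.sum_repr' (J X)]
  exact Finset.sum_congr rfl fun a _ => by rw [real_inner_comm]

end AuxIK


/-- The commutator identities `[L, i(X)] = ε((JX)♭)`,
`[L, ε(X♭)] = 0`, `[Λ, i(X)] = 0` and `[Λ, ε(X♭)] = -i(JX)`, for every `X ∈ V`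
and every form `φ`; in the degenerate low degrees (where `i(X)` or `Λ` vanishes
for degree reasons) the corresponding term is omitted. -/
theorem commutators_L_Lam_interior_exterior
    {m : ℕ} (hm : 1 ≤ m)
    (J : V →ₗ[ℝ] V) (hJO : ∀ x y : V, ⟪J x, J y⟫ = ⟪x, y⟫)
    (hJ2 : ∀ x : V, J (J x) = -x)
    (e : OrthonormalBasis (Fin (2 * m)) ℝ V) :
    (∀ (r : ℕ) (φ : Form V (r + 1)) (X : V),
        Lop (Kform J hJO hJ2) (iprodS X φ) - iprodS X (Lop (Kform J hJO hJ2) φ) =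
          eps (flat (J X)) φ) ∧
    (∀ (φ : Form V 0) (X : V),
        -iprodS X (Lop (Kform J hJO hJ2) φ) = eps (flat (J X)) φ) ∧
    (∀ (r : ℕ) (φ : Form V r) (X : V),
        Lop (Kform J hJO hJ2) (eps (flat X) φ) - eps (flat X) (Lop (Kform J hJO hJ2) φ) = 0) ∧
    (∀ (r : ℕ) (φ : Form V (r + 3)) (X : V),
        Lam J e (iprodS X φ) - iprodS X (Lam J e φ) = 0) ∧
    (∀ (r : ℕ) (φ : Form V (r + 2)) (X : V),
        Lam J e (eps (flat X) φ) - eps (flat X) (Lam J e φ) = -iprodS (J X) φ) ∧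
    (∀ (φ : Form V 1) (X : V),
        Lam J e (eps (flat X) φ) = -iprodS (J X) φ) := by
  have hflip : ∀ x y : V, (⟪x, J y⟫ : ℝ) = -⟪J x, y⟫ := by
    intro x y
    have h1 := hJO x (J y)
    rw [hJ2 y, inner_neg_right] at h1
    linarith
  have flat_ev : ∀ (X Y : V), flat X (fun _ : Fin 1 => Y) = ⟪X, Y⟫ := fun X Y => rfl
  have iK : ∀ X : V, iprodS X (Kform J hJO hJ2) = - flat (J X) := by
    intro X
    ext v
    rw [AlternatingMap.neg_apply, iprodS_apply]
    have hfl : flat (J X) v = ⟪J X, v 0⟫ := rfl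
    have hK : Kform J hJO hJ2 (Fin.cons X v) = ⟪X, J ((Fin.cons X v : Fin 2 → V) 1)⟫ := rfl
    rw [hK, hfl, show (Fin.cons X v : Fin 2 → V) 1 = v 0 by
      rw [← Fin.succ_zero_eq_one, Fin.cons_succ], hflip]
  refine ⟨?_, ?_, ?_, ?_, ?_, ?_⟩
  · intro r φ X
    show wedge2 (Kform J hJO hJ2) (iprodS X φ)
        - iprodS X (wedge2 (Kform J hJO hJ2) φ) = eps (flat (J X)) φ
    rw [leibB, iK, eps_neg_left]
    abel
  · intro φ X
    show -iprodS X (wedge2 (Kform J hJO hJ2) φ) = eps (flat (J X)) φ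
    rw [leibB0, iK, eps_neg_left, neg_neg]
  · intro r φ X
    show wedge2 (Kform J hJO hJ2) (eps (flat X) φ)
        - eps (flat X) (wedge2 (Kform J hJO hJ2) φ) = 0
    rw [commL, sub_self]
  · intro r φ X
    have expand : ∀ a : Fin (2 * m),
        iprodS (J (e a)) (iprodS (e a) (iprodS X φ))
          = iprodS X (iprodS (J (e a)) (iprodS (e a) φ)) := by
      intro a
      rw [iprod_anticomm (e a) X φ, iprodS_neg,
        iprod_anticomm (J (e a)) X (iprodS (e a) φ), neg_neg]
    rw [sub_eq_zero]
    simp only [Lam]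
    rw [iprodS_smul, iprodS_sum]
    congr 1
    exact Finset.sum_congr rfl fun a _ => expand a
  · intro r φ X
    have expand : ∀ a : Fin (2 * m),
        iprodS (J (e a)) (iprodS (e a) (eps (flat X) φ))
          = ⟪X, e a⟫ • iprodS (J (e a)) φ - ⟪X, J (e a)⟫ • iprodS (e a) φ
            + eps (flat X) (iprodS (J (e a)) (iprodS (e a) φ)) := by
      intro a
      rw [leibA (flat X) φ (e a), flat_ev, iprodS_sub, iprodS_smul,
        leibA (flat X) (iprodS (e a) φ) (J (e a)), flat_ev]
      module
    simp only [Lam]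
    rw [Finset.sum_congr rfl fun a _ => expand a, Finset.sum_add_distrib,
      Finset.sum_sub_distrib, sumS1 J e X φ, sumS2 J hflip e X φ, ← eps_sum_right,
      eps_smul_right]
    module
  · intro φ X
    have expand : ∀ a : Fin (2 * m),
        iprodS (J (e a)) (iprodS (e a) (eps (flat X) φ))
          = ⟪X, e a⟫ • iprodS (J (e a)) φ - ⟪X, J (e a)⟫ • iprodS (e a) φ := by
      intro a
      rw [leibA (flat X) φ (e a), flat_ev, iprodS_sub, iprodS_smul, leibA0, flat_ev]
    simp only [Lam]
    rw [Finset.sum_congr rfl fun a _ => expand a, Finset.sum_sub_distrib,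
      sumS1 J e X φ, sumS2 J hflip e X φ]
    module

end
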